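/- Let W be a weak fundamental localizer, J a set, D a square (u : A → B, u' : A' → B', v : A' → A, w : B' → B, α : u ∘ v ⟶ w ∘ u'), and for each j ∈ J a square D_j (u_j : A_j → B_j, target square legs v_j : A_j → A', w_j : B_j → B', α_j) horizontally composable with D on the right. Assume every D_j is W-exact and that every object of B' is of the form w_j(b_j) for some j ∈ J and some object b_j of B_j. Then D is W-exact if and only if for every j ∈ J the horizontal composite D ∘h D_j is W-exact. -/

import Mathlib

open CategoryTheory

universe u

namespace Paper

/-- A class of functors between small categories. -/
abbrev FunctorClass : Type (u + 1) :=
  ∀ ⦃A B : Type u⦄ [SmallCategory A] [SmallCategory B], (A ⥤ B) → Prop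

/-- The punctual category `e`. -/
abbrev PtCat : Type u := Discrete PUnit.{u + 1}

/-- The category `A` is `W`-aspherical: the functor `A ⥤ e` lies in `W`. -/
def IsAsphericalCat (W : FunctorClass.{u}) (A : Type u) [SmallCategory A] : Prop :=
  W (Functor.star A)

/-- The functor `F : A ⥤ B` is `W`-aspherical: every comma category `A/b` is `W`-aspherical. -/
def IsAsphericalFunctor (W : FunctorClass.{u}) {A B : Type u} [SmallCategory A]
    [SmallCategory B] (F : A ⥤ B) : Prop :=
  ∀ b : B, IsAsphericalCat W (CostructuredArrow F b)

/-- The functor `F : A ⥤ B` is `W`-coaspherical: every comma category `b\A` is `W`-aspherical. -/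
def IsCoasphericalFunctor (W : FunctorClass.{u}) {A B : Type u} [SmallCategory A]
    [SmallCategory B] (F : A ⥤ B) : Prop :=
  ∀ b : B, IsAsphericalCat W (StructuredArrow b F)

/-- For `F : A ⥤ B` and `b : B`, the induced functor `A/b ⥤ B/b`. -/
def sliceInduced {A B : Type u} [SmallCategory A] [SmallCategory B] (F : A ⥤ B) (b : B) :
    CostructuredArrow F b ⥤ Over b where
  obj x := Over.mk x.hom
  map {x y} f := Over.homMk (F.map f.left) (by simp [CostructuredArrow.w f])

/-- For a strictly commutative triangle given by `F : A ⥤ B`, `G : B ⥤ C` and `c : C`,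
the induced functor `A/c ⥤ B/c`. -/
def triangleSlice {A B C : Type u} [SmallCategory A] [SmallCategory B] [SmallCategory C]
    (F : A ⥤ B) (G : B ⥤ C) (c : C) :
    CostructuredArrow (F ⋙ G) c ⥤ CostructuredArrow G c where
  obj x := CostructuredArrow.mk (Y := F.obj x.left) x.hom
  map {x y} f := CostructuredArrow.homMk (F.map f.left) (CostructuredArrow.w f)

/-- For a strictly commutative triangle given by `F : A ⥤ B`, `G : B ⥤ C` and `c : C`,
the induced functor `c\A ⥤ c\B`. -/
def triangleCoslice {A B C : Type u} [SmallCategory A] [SmallCategory B] [SmallCategory C]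
    (F : A ⥤ B) (G : B ⥤ C) (c : C) :
    StructuredArrow c (F ⋙ G) ⥤ StructuredArrow c G where
  obj x := StructuredArrow.mk (Y := F.obj x.right) x.hom
  map {x y} f := StructuredArrow.homMk (F.map f.right) (StructuredArrow.w f)


/-- `W` is a weak fundamental localizer. -/
structure IsWeakFundamentalLocalizer (W : FunctorClass.{u}) : Prop where
  id_mem : ∀ (A : Type u) [SmallCategory A], W (𝟭 A)
  comp_mem : ∀ {A B C : Type u} [SmallCategory A] [SmallCategory B] [SmallCategory C]
      (F : A ⥤ B) (G : B ⥤ C), W F → W G → W (F ⋙ G)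
  of_comp_left : ∀ {A B C : Type u} [SmallCategory A] [SmallCategory B] [SmallCategory C]
      (F : A ⥤ B) (G : B ⥤ C), W F → W (F ⋙ G) → W G
  of_comp_right : ∀ {A B C : Type u} [SmallCategory A] [SmallCategory B] [SmallCategory C]
      (F : A ⥤ B) (G : B ⥤ C), W G → W (F ⋙ G) → W F
  retract_mem : ∀ {A A' : Type u} [SmallCategory A] [SmallCategory A']
      (i : A' ⥤ A) (r : A ⥤ A'), i ⋙ r = 𝟭 A' → W (r ⋙ i) → W r
  star_mem : ∀ (A : Type u) [SmallCategory A], Limits.HasTerminal A → W (Functor.star A)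
  mem_of_slices : ∀ {A B : Type u} [SmallCategory A] [SmallCategory B] (F : A ⥤ B),
      (∀ b : B, W (sliceInduced F b)) → W F

/-- `W` is a fundamental localizer. -/
structure IsFundamentalLocalizer (W : FunctorClass.{u}) : Prop where
  id_mem : ∀ (A : Type u) [SmallCategory A], W (𝟭 A)
  comp_mem : ∀ {A B C : Type u} [SmallCategory A] [SmallCategory B] [SmallCategory C]
      (F : A ⥤ B) (G : B ⥤ C), W F → W G → W (F ⋙ G)
  of_comp_left : ∀ {A B C : Type u} [SmallCategory A] [SmallCategory B] [SmallCategory C]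
      (F : A ⥤ B) (G : B ⥤ C), W F → W (F ⋙ G) → W G
  of_comp_right : ∀ {A B C : Type u} [SmallCategory A] [SmallCategory B] [SmallCategory C]
      (F : A ⥤ B) (G : B ⥤ C), W G → W (F ⋙ G) → W F
  retract_mem : ∀ {A A' : Type u} [SmallCategory A] [SmallCategory A']
      (i : A' ⥤ A) (r : A ⥤ A'), i ⋙ r = 𝟭 A' → W (r ⋙ i) → W r
  star_mem : ∀ (A : Type u) [SmallCategory A], Limits.HasTerminal A → W (Functor.star A)
  mem_of_rel_slices : ∀ {A B C : Type u} [SmallCategory A] [SmallCategory B] [SmallCategory C]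
      (F : A ⥤ B) (G : B ⥤ C), (∀ c : C, W (triangleSlice F G c)) → W F


section Squares

variable {A A' B B' : Type u} [SmallCategory A] [SmallCategory A']
  [SmallCategory B] [SmallCategory B']

/-- The functor `A'/b' ⥤ A/w(b')` induced by a square `(u, u', v, w, α)`. -/
def squareSlice (u : A ⥤ B) (u' : A' ⥤ B') (v : A' ⥤ A) (w : B' ⥤ B)
    (α : v ⋙ u ⟶ u' ⋙ w) (b' : B') :
    CostructuredArrow u' b' ⥤ CostructuredArrow u (w.obj b') where
  obj x := CostructuredArrow.mk (Y := v.obj x.left) (α.app x.left ≫ w.map x.hom)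
  map {x y} f := CostructuredArrow.homMk (v.map f.left) (by
    have h := α.naturality f.left
    dsimp at h ⊢
    rw [← Category.assoc, h, Category.assoc, ← Functor.map_comp, CostructuredArrow.w f])

/-- The functor `a\A' ⥤ u(a)\B'` induced by a square `(u, u', v, w, α)`. -/
def squareCoslice (u : A ⥤ B) (u' : A' ⥤ B') (v : A' ⥤ A) (w : B' ⥤ B)
    (α : v ⋙ u ⟶ u' ⋙ w) (a : A) :
    StructuredArrow a v ⥤ StructuredArrow (u.obj a) w where
  obj x := StructuredArrow.mk (Y := u'.obj x.right) (u.map x.hom ≫ α.app x.right)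
  map {x y} f := StructuredArrow.homMk (u'.map f.right) (by
    have h := α.naturality f.right
    dsimp at h ⊢
    rw [Category.assoc, ← h, ← Category.assoc, ← Functor.map_comp, StructuredArrow.w f])

/-- The category `A'_{(a, b', g)}` attached to a square `(u, u', v, w, α)` and a triple
`(a, b', g : u(a) ⟶ w(b'))`. -/
structure SquareFiber (u : A ⥤ B) (u' : A' ⥤ B') (v : A' ⥤ A) (w : B' ⥤ B)
    (α : v ⋙ u ⟶ u' ⋙ w) (a : A) (b' : B') (g : u.obj a ⟶ w.obj b') : Type u where
  pt : A'
  f : a ⟶ v.obj pt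
  g' : u'.obj pt ⟶ b'
  fac : u.map f ≫ α.app pt ≫ w.map g' = g

instance (u : A ⥤ B) (u' : A' ⥤ B') (v : A' ⥤ A) (w : B' ⥤ B)
    (α : v ⋙ u ⟶ u' ⋙ w) (a : A) (b' : B') (g : u.obj a ⟶ w.obj b') :
    Category (SquareFiber u u' v w α a b' g) where
  Hom x y := { h : x.pt ⟶ y.pt // x.f ≫ v.map h = y.f ∧ u'.map h ≫ y.g' = x.g' }
  id x := ⟨𝟙 x.pt, by simp, by simp⟩
  comp {x y z} f g := ⟨f.1 ≫ g.1, by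
      rw [Functor.map_comp, ← Category.assoc, f.2.1, g.2.1], by
      rw [Functor.map_comp, Category.assoc, g.2.2, f.2.2]⟩
  id_comp f := by apply Subtype.ext; simp
  comp_id f := by apply Subtype.ext; simp
  assoc f g h := by apply Subtype.ext; simp

/-- A square `(u, u', v, w, α)` is `W`-exact. -/
def IsExactSquare (W : FunctorClass.{u}) (u : A ⥤ B) (u' : A' ⥤ B') (v : A' ⥤ A)
    (w : B' ⥤ B) (α : v ⋙ u ⟶ u' ⋙ w) : Prop :=
  ∀ b' : B', IsCoasphericalFunctor W (squareSlice u u' v w α b')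

/-- The 2-cell of the opposite square. -/
def squareOpCell (u : A ⥤ B) (u' : A' ⥤ B') (v : A' ⥤ A) (w : B' ⥤ B)
    (α : v ⋙ u ⟶ u' ⋙ w) : u'.op ⋙ w.op ⟶ v.op ⋙ u.op :=
  NatTrans.op α

end Squares

section Comps

/-- The 2-cell of the horizontal composite of two squares. -/
def hcomp2cell {A A' A'' B B' B'' : Type u}
    [SmallCategory A] [SmallCategory A'] [SmallCategory A'']
    [SmallCategory B] [SmallCategory B'] [SmallCategory B'']
    {u : A ⥤ B} {u' : A' ⥤ B'} {u'' : A'' ⥤ B''}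
    {v : A' ⥤ A} {w : B' ⥤ B} {v' : A'' ⥤ A'} {w' : B'' ⥤ B'}
    (α : v ⋙ u ⟶ u' ⋙ w) (α' : v' ⋙ u' ⟶ u'' ⋙ w') :
    (v' ⋙ v) ⋙ u ⟶ u'' ⋙ (w' ⋙ w) :=
  Functor.whiskerLeft v' α ≫ Functor.whiskerRight α' w

/-- The 2-cell of the vertical composite of two squares. -/
def vcomp2cell {A A' B B' C C' : Type u}
    [SmallCategory A] [SmallCategory A'] [SmallCategory B] [SmallCategory B']
    [SmallCategory C] [SmallCategory C']
    {u : A ⥤ B} {u' : A' ⥤ B'} {v : A' ⥤ A} {w : B' ⥤ B}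
    {x : B ⥤ C} {x' : B' ⥤ C'} {y : C' ⥤ C}
    (α : v ⋙ u ⟶ u' ⋙ w) (β : w ⋙ x ⟶ x' ⋙ y) :
    v ⋙ (u ⋙ x) ⟶ (u' ⋙ x') ⋙ y :=
  Functor.whiskerRight α x ≫ Functor.whiskerLeft u' β

end Comps

section Fibers

variable {A B : Type u} [SmallCategory A] [SmallCategory B]

/-- The fiber `A_b` of `F : A ⥤ B` at `b : B`. -/
structure CatFiber (F : A ⥤ B) (b : B) : Type u where
  obj : A
  eq : F.obj obj = b

instance (F : A ⥤ B) (b : B) : Category (CatFiber F b) where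
  Hom x y := { f : x.obj ⟶ y.obj // F.map f = eqToHom (x.eq.trans y.eq.symm) }
  id x := ⟨𝟙 x.obj, by simp⟩
  comp {x y z} f g := ⟨f.1 ≫ g.1, by rw [Functor.map_comp, f.2, g.2, eqToHom_trans]⟩
  id_comp f := by apply Subtype.ext; simp
  comp_id f := by apply Subtype.ext; simp
  assoc f g h := by apply Subtype.ext; simp

/-- The canonical functor `A_b ⥤ A/b`. -/
def fiberToSlice (F : A ⥤ B) (b : B) : CatFiber F b ⥤ CostructuredArrow F b where
  obj x := CostructuredArrow.mk (Y := x.obj) (eqToHom x.eq)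
  map {x y} f := CostructuredArrow.homMk f.1 (by simp [f.2])

/-- The canonical functor `A_b ⥤ b\A`. -/
def fiberToCoslice (F : A ⥤ B) (b : B) : CatFiber F b ⥤ StructuredArrow b F where
  obj x := StructuredArrow.mk (Y := x.obj) (eqToHom x.eq.symm)
  map {x y} f := StructuredArrow.homMk f.1 (by simp [f.2])

/-- The functor `F` is `W`-proper. -/
def IsProper (W : FunctorClass.{u}) (F : A ⥤ B) : Prop :=
  ∀ b : B, IsCoasphericalFunctor W (fiberToSlice F b)

/-- The functor `F` is `W`-smooth. -/
def IsSmooth (W : FunctorClass.{u}) (F : A ⥤ B) : Prop :=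
  ∀ b : B, IsAsphericalFunctor W (fiberToCoslice F b)

/-- The functor `F` is a precofibration: each canonical functor `A_b ⥤ A/b` admits a left
adjoint. -/
def IsPrecofibration (F : A ⥤ B) : Prop :=
  ∀ b : B, (fiberToSlice F b).IsRightAdjoint

end Fibers

/-- `F` is an isomorphism of categories. -/
def IsCatIso {A B : Type u} [SmallCategory A] [SmallCategory B] (F : A ⥤ B) : Prop :=
  ∃ G : B ⥤ A, F ⋙ G = 𝟭 A ∧ G ⋙ F = 𝟭 B

section Pullback

variable {A B B' : Type u} [SmallCategory A] [SmallCategory B] [SmallCategory B']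

/-- The strict pullback `B' ×_B A` of `u : A ⥤ B` and `w : B' ⥤ B`. -/
structure CatPullback (u : A ⥤ B) (w : B' ⥤ B) : Type u where
  fst : B'
  snd : A
  eq : w.obj fst = u.obj snd

instance (u : A ⥤ B) (w : B' ⥤ B) : Category (CatPullback u w) where
  Hom x y := { p : (x.fst ⟶ y.fst) × (x.snd ⟶ y.snd) //
    w.map p.1 ≫ eqToHom y.eq = eqToHom x.eq ≫ u.map p.2 }
  id x := ⟨(𝟙 x.fst, 𝟙 x.snd), by simp⟩
  comp {x y z} f g := ⟨(f.1.1 ≫ g.1.1, f.1.2 ≫ g.1.2), by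
    rw [Functor.map_comp, Functor.map_comp, Category.assoc, g.2, ← Category.assoc, f.2,
      Category.assoc]⟩
  id_comp f := by apply Subtype.ext; simp
  comp_id f := by apply Subtype.ext; simp
  assoc f g h := by apply Subtype.ext; simp

/-- First projection of the strict pullback. -/
def pbFst (u : A ⥤ B) (w : B' ⥤ B) : CatPullback u w ⥤ B' where
  obj x := x.fst
  map f := f.1.1

/-- Second projection of the strict pullback. -/
def pbSnd (u : A ⥤ B) (w : B' ⥤ B) : CatPullback u w ⥤ A where
  obj x := x.snd
  map f := f.1.2

theorem pb_comm (u : A ⥤ B) (w : B' ⥤ B) : pbSnd u w ⋙ u = pbFst u w ⋙ w := by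
  have hobj : ∀ x : CatPullback u w, (pbSnd u w ⋙ u).obj x = (pbFst u w ⋙ w).obj x :=
    fun x => x.eq.symm
  refine CategoryTheory.Functor.ext hobj (fun x y f => ?_)
  have h := f.2
  dsimp only [Functor.comp_map, pbFst, pbSnd]
  rw [h]
  simp
  erw [eqToHom_trans_assoc]
  simp

/-- The comparison functor from the top-left corner of a commutative square to the
strict pullback. -/
def toPullback {A' : Type u} [SmallCategory A'] (u : A ⥤ B) (u' : A' ⥤ B') (v : A' ⥤ A)
    (w : B' ⥤ B) (h : v ⋙ u = u' ⋙ w) : A' ⥤ CatPullback u w where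
  obj a' := ⟨u'.obj a', v.obj a', (Functor.congr_obj h a').symm⟩
  map {x y} f := ⟨(u'.map f, v.map f), by
    have := Functor.congr_hom h f
    dsimp at this
    rw [this]
    simp⟩
  map_id x := by
    apply Subtype.ext
    show (u'.map (𝟙 x), v.map (𝟙 x)) = (𝟙 _, 𝟙 _)
    simp
  map_comp f g := by
    apply Subtype.ext
    show (u'.map _, v.map _) = (u'.map _ ≫ u'.map _, v.map _ ≫ v.map _)
    simp

end Pullback

section BaseChange

variable {A A' B B' : Type u} [SmallCategory A] [SmallCategory A']
  [SmallCategory B] [SmallCategory B']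

/-- The base-change morphism `v ∘ r' ⟶ r ∘ w` associated with a square whose vertical
edges admit right adjoints. -/
def baseChangeR {u : A ⥤ B} {u' : A' ⥤ B'} {v : A' ⥤ A} {w : B' ⥤ B}
    {r : B ⥤ A} {r' : B' ⥤ A'} (adj : u ⊣ r) (adj' : u' ⊣ r')
    (α : v ⋙ u ⟶ u' ⋙ w) : r' ⋙ v ⟶ w ⋙ r :=
  Functor.whiskerLeft (r' ⋙ v) adj.unit ≫ Functor.whiskerLeft r' (Functor.whiskerRight α r) ≫
    Functor.whiskerRight adj'.counit (w ⋙ r)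

/-- The base-change morphism `w'' ∘ u ⟶ u' ∘ v''` associated with a square whose horizontal
edges admit left adjoints. -/
def baseChangeL {u : A ⥤ B} {u' : A' ⥤ B'} {v : A' ⥤ A} {w : B' ⥤ B}
    {v'' : A ⥤ A'} {w'' : B ⥤ B'} (adjv : v'' ⊣ v) (adjw : w'' ⊣ w)
    (α : v ⋙ u ⟶ u' ⋙ w) : u ⋙ w'' ⟶ v'' ⋙ u' :=
  Functor.whiskerRight adjv.unit (u ⋙ w'') ≫ Functor.whiskerLeft v'' (Functor.whiskerRight α w'') ≫
    Functor.whiskerLeft (v'' ⋙ u') adjw.counit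

end BaseChange

section LocColoc

variable {X Y C : Type u} [SmallCategory X] [SmallCategory Y] [SmallCategory C]

/-- `F : X ⥤ Y`, viewed over `C` via `P : Y ⥤ C` (and `F ⋙ P` on `X`), is a `W`-equivalence
locally on `C`. -/
def IsLocallyEquiv (W : FunctorClass.{u}) (F : X ⥤ Y) (P : Y ⥤ C) : Prop :=
  ∀ c : C, W (triangleSlice F P c)

/-- `F : X ⥤ Y`, viewed over `C` via `P : Y ⥤ C` (and `F ⋙ P` on `X`), is a `W`-equivalence
colocally on `C`. -/
def IsColocallyEquiv (W : FunctorClass.{u}) (F : X ⥤ Y) (P : Y ⥤ C) : Prop :=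
  ∀ c : C, W (triangleCoslice F P c)

end LocColoc

/-- A square `(u, u', v, w, α)` is weakly `W`-exact. -/
def IsWeakExactSquare (W : FunctorClass.{u}) {A A' B B' : Type u} [SmallCategory A]
    [SmallCategory A'] [SmallCategory B] [SmallCategory B'] (u : A ⥤ B) (u' : A' ⥤ B')
    (v : A' ⥤ A) (w : B' ⥤ B) (α : v ⋙ u ⟶ u' ⋙ w) : Prop :=
  ∀ b' : B', IsColocallyEquiv W (squareSlice u u' v w α b') (CostructuredArrow.proj u (w.obj b'))

/-- `w : B' ⥤ B` is a discrete fibration. -/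
def IsDiscreteFibration {B' B : Type u} [SmallCategory B'] [SmallCategory B]
    (w : B' ⥤ B) : Prop :=
  ∀ (b' : B') (b : B) (g : b ⟶ w.obj b'),
    ∃! p : Σ b₀ : B', b₀ ⟶ b', ∃ h : w.obj p.1 = b, w.map p.2 = eqToHom h ≫ g

/-- The coarse fundamental localizer: functors whose source and target are both empty or
both nonempty. -/
def coarseLocalizer : FunctorClass.{u} :=
  @fun A B _ _ _ => Nonempty A ↔ Nonempty B

/-- The map induced on sets of connected components. -/
def π₀map {A B : Type u} [SmallCategory A] [SmallCategory B] (F : A ⥤ B) :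
    ConnectedComponents A → ConnectedComponents B :=
  F.mapConnectedComponents

/-- The fundamental localizer `W₀` of `0`-equivalences: functors inducing a bijection on
connected components. -/
def W₀ : FunctorClass.{u} :=
  @fun _ _ _ _ F => Function.Bijective (π₀map F)

/-- A square in `Cat`: four small categories, four functors and a `2`-cell
`α : u ∘ v ⟶ w ∘ u'`. -/
structure CatSquare : Type (u + 1) where
  {A' : Type u}
  {A : Type u}
  {B' : Type u}
  {B : Type u}
  [instA' : SmallCategory A']
  [instA : SmallCategory A]
  [instB' : SmallCategory B']
  [instB : SmallCategory B]
  u : A ⥤ B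
  u' : A' ⥤ B'
  v : A' ⥤ A
  w : B' ⥤ B
  α : v ⋙ u ⟶ u' ⋙ w

attribute [instance] CatSquare.instA' CatSquare.instA CatSquare.instB' CatSquare.instB

/-- A bundled square is `W`-exact. -/
def CatSquare.IsExact (W : FunctorClass.{u}) (S : CatSquare.{u}) : Prop :=
  IsExactSquare W S.u S.u' S.v S.w S.α

/-- The opposite of a square. -/
def CatSquare.op (S : CatSquare.{u}) : CatSquare.{u} :=
  ⟨S.w.op, S.v.op, S.u'.op, S.u.op, squareOpCell S.u S.u' S.v S.w S.α⟩

/-- The comma square associated with `u : A ⥤ B` and `w : B' ⥤ B`. -/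
def commaSquare {A B B' : Type u} [SmallCategory A] [SmallCategory B] [SmallCategory B']
    (u : A ⥤ B) (w : B' ⥤ B) : CatSquare.{u} :=
  ⟨u, Comma.snd u w, Comma.fst u w, w, Comma.natTrans u w⟩

/-- The comma square `D^g_{u, b}` of `u : A ⥤ B` at an object `b : B`. -/
def commaObjSquare {A B : Type u} [SmallCategory A] [SmallCategory B] (u : A ⥤ B) (b : B) :
    CatSquare.{u} :=
  commaSquare u (Functor.fromPUnit.{u} b)

/-- The dual comma square `D^d_{v, a}` of `v : A' ⥤ A` at an object `a : A`. -/
def commaObjSquareD {A' A : Type u} [SmallCategory A'] [SmallCategory A] (v : A' ⥤ A)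
    (a : A) : CatSquare.{u} :=
  commaSquare (Functor.fromPUnit.{u} a) v

/-- The square with top edge `F : A ⥤ B`, the canonical functors `A ⥤ e`, `B ⥤ e` as
vertical edges, identity bottom edge and identity `2`-cell. -/
def starSquare {A B : Type u} [SmallCategory A] [SmallCategory B] (F : A ⥤ B) :
    CatSquare.{u} :=
  ⟨Functor.star B, Functor.star A, F, 𝟭 (PtCat.{u}), 𝟙 (F ⋙ Functor.star B)⟩

/-- The square with all four corners of the form `(A, e, e, e)`, canonical edges and
identity `2`-cell. -/
def ptSquare (A : Type u) [SmallCategory A] : CatSquare.{u} :=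
  ⟨𝟭 (PtCat.{u}), Functor.star A, Functor.star A, 𝟭 (PtCat.{u}), 𝟙 (Functor.star A)⟩

/-- `Q` is stable under horizontal composition of squares (condition CS1h). -/
def StableHComp (Q : CatSquare.{u} → Prop) : Prop :=
  ∀ {A A' A'' B B' B'' : Type u}
    [SmallCategory A] [SmallCategory A'] [SmallCategory A'']
    [SmallCategory B] [SmallCategory B'] [SmallCategory B'']
    (u : A ⥤ B) (u' : A' ⥤ B') (u'' : A'' ⥤ B'')
    (v : A' ⥤ A) (w : B' ⥤ B) (v' : A'' ⥤ A') (w' : B'' ⥤ B')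
    (α : v ⋙ u ⟶ u' ⋙ w) (α' : v' ⋙ u' ⟶ u'' ⋙ w'),
    Q ⟨u, u', v, w, α⟩ → Q ⟨u', u'', v', w', α'⟩ →
    Q ⟨u, u'', v' ⋙ v, w' ⋙ w, hcomp2cell α α'⟩

/-- `Q` is stable under vertical composition of squares (condition CS1v). -/
def StableVComp (Q : CatSquare.{u} → Prop) : Prop :=
  ∀ {A A' B B' C C' : Type u}
    [SmallCategory A] [SmallCategory A'] [SmallCategory B] [SmallCategory B']
    [SmallCategory C] [SmallCategory C']
    (u : A ⥤ B) (u' : A' ⥤ B') (v : A' ⥤ A) (w : B' ⥤ B)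
    (x : B ⥤ C) (x' : B' ⥤ C') (y : C' ⥤ C)
    (α : v ⋙ u ⟶ u' ⋙ w) (β : w ⋙ x ⟶ x' ⋙ y),
    Q ⟨u, u', v, w, α⟩ → Q ⟨x, x', w, y, β⟩ →
    Q ⟨u ⋙ x, u' ⋙ x', v, y, vcomp2cell α β⟩

/-- `Q` satisfies horizontal descent (condition CS2h). -/
def HorizontalDescent (Q : CatSquare.{u} → Prop) : Prop :=
  ∀ {A A' B B' : Type u}
    [SmallCategory A] [SmallCategory A'] [SmallCategory B] [SmallCategory B']
    (u : A ⥤ B) (u' : A' ⥤ B') (v : A' ⥤ A) (w : B' ⥤ B) (α : v ⋙ u ⟶ u' ⋙ w)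
    (J : Type u) (Aj Bj : J → Type u)
    [∀ j, SmallCategory (Aj j)] [∀ j, SmallCategory (Bj j)]
    (uj : ∀ j, Aj j ⥤ Bj j) (vj : ∀ j, Aj j ⥤ A') (wj : ∀ j, Bj j ⥤ B')
    (αj : ∀ j, vj j ⋙ u' ⟶ uj j ⋙ wj j),
    (∀ b' : B', ∃ j, ∃ b : Bj j, (wj j).obj b = b') →
    (∀ j, Q ⟨u', uj j, vj j, wj j, αj j⟩) →
    (∀ j, Q ⟨u, uj j, vj j ⋙ v, wj j ⋙ w, hcomp2cell α (αj j)⟩) →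
    Q ⟨u, u', v, w, α⟩

/-- `Q` satisfies local descent (condition CS3h). -/
def LocalDescent (Q : CatSquare.{u} → Prop) : Prop :=
  ∀ {A A' B B' : Type u}
    [SmallCategory A] [SmallCategory A'] [SmallCategory B] [SmallCategory B']
    (u : A ⥤ B) (u' : A' ⥤ B') (v : A' ⥤ A) (w : B' ⥤ B) (α : v ⋙ u ⟶ u' ⋙ w),
    (∀ b' : B', Q ⟨u, Comma.snd u' (Functor.fromPUnit.{u} b'),
        Comma.fst u' (Functor.fromPUnit.{u} b') ⋙ v, Functor.fromPUnit.{u} b' ⋙ w,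
        hcomp2cell α (Comma.natTrans u' (Functor.fromPUnit.{u} b'))⟩) →
    Q ⟨u, u', v, w, α⟩

/-- `Q` satisfies colocal descent (condition CS3v). -/
def ColocalDescent (Q : CatSquare.{u} → Prop) : Prop :=
  ∀ {A A' B B' : Type u}
    [SmallCategory A] [SmallCategory A'] [SmallCategory B] [SmallCategory B']
    (u : A ⥤ B) (u' : A' ⥤ B') (v : A' ⥤ A) (w : B' ⥤ B) (α : v ⋙ u ⟶ u' ⋙ w),
    (∀ a : A, Q ⟨Functor.fromPUnit.{u} a ⋙ u,
        Comma.snd (Functor.fromPUnit.{u} a) v ⋙ u',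
        Comma.fst (Functor.fromPUnit.{u} a) v, w,
        vcomp2cell (Comma.natTrans (Functor.fromPUnit.{u} a) v) α⟩) →
    Q ⟨u, u', v, w, α⟩

/-- `Q` is stable under passing to opposite squares (condition CS4). -/
def OpStable (Q : CatSquare.{u} → Prop) : Prop :=
  ∀ S : CatSquare.{u}, Q S → Q S.op

/-- Isomorphism of squares. -/
def CatSquare.Isomorphic (S T : CatSquare.{u}) : Prop :=
  ∃ (eA' : S.A' ⥤ T.A') (eA : S.A ⥤ T.A) (eB' : S.B' ⥤ T.B') (eB : S.B ⥤ T.B)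
    (_ : IsCatIso eA') (_ : IsCatIso eA) (_ : IsCatIso eB') (_ : IsCatIso eB)
    (hv : S.v ⋙ eA = eA' ⋙ T.v) (hu : S.u ⋙ eB = eA ⋙ T.u)
    (hu' : S.u' ⋙ eB' = eA' ⋙ T.u') (hw : S.w ⋙ eB = eB' ⋙ T.w),
    Functor.whiskerRight S.α eB =
      eqToHom (by rw [Functor.assoc, hu, ← Functor.assoc, hv, Functor.assoc]) ≫
        Functor.whiskerLeft eA' T.α ≫
        eqToHom (by rw [← Functor.assoc, ← hu', Functor.assoc, ← hw, ← Functor.assoc])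

/-- A bundled square is a right Beck–Chevalley square. -/
def CatSquare.IsRightBC (S : CatSquare.{u}) : Prop :=
  ∃ (v'' : S.A ⥤ S.A') (w'' : S.B ⥤ S.B') (adjv : v'' ⊣ S.v) (adjw : w'' ⊣ S.w),
    IsIso (baseChangeL adjv adjw S.α)

/-- The functor `A/b ⥤ B/b` induced by `u : A ⥤ B`, in terms of comma categories. -/
def commaSliceInduced {A B : Type u} [SmallCategory A] [SmallCategory B] (u : A ⥤ B)
    (b : B) : Comma u (Functor.fromPUnit.{u} b) ⥤ Comma (𝟭 B) (Functor.fromPUnit.{u} b) where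
  obj x := { left := u.obj x.left, right := x.right, hom := x.hom }
  map {x y} f := { left := u.map f.left, right := f.right, w := by simp [f.w] }

/-- The cartesian square expressing `A/b` as the pullback of `u : A ⥤ B` along the
forgetful functor `B/b ⥤ B`. -/
def sliceCartSquare {A B : Type u} [SmallCategory A] [SmallCategory B] (u : A ⥤ B)
    (b : B) : CatSquare.{u} :=
  ⟨u, commaSliceInduced u b, Comma.fst u (Functor.fromPUnit.{u} b),
    Comma.fst (𝟭 B) (Functor.fromPUnit.{u} b),
    𝟙 (Comma.fst u (Functor.fromPUnit.{u} b) ⋙ u)⟩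


section Solution

open Limits

variable {W : FunctorClass.{u}}

instance : Subsingleton PtCat.{u} := ⟨by rintro ⟨⟨⟩⟩ ⟨⟨⟩⟩; rfl⟩

lemma toPt_eq {X : Type u} [SmallCategory X] (F G : X ⥤ PtCat.{u}) : F = G :=
  CategoryTheory.Functor.ext (fun _ => Subsingleton.elim _ _)
    (fun _ _ _ => Subsingleton.elim _ _)

lemma star_fac {A B : Type u} [SmallCategory A] [SmallCategory B] (F : A ⥤ B) :
    F ⋙ (Functor.star B : B ⥤ PtCat.{u}) = (Functor.star A : A ⥤ PtCat.{u}) :=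
  toPt_eq _ _

variable (hW : IsWeakFundamentalLocalizer W)
include hW

lemma asp_src {A B : Type u} [SmallCategory A] [SmallCategory B] (F : A ⥤ B)
    (hF : W F) (hB : IsAsphericalCat W B) : IsAsphericalCat W A := by
  have := hW.comp_mem F (Functor.star B) hF hB
  rwa [star_fac] at this

lemma asp_tgt {A B : Type u} [SmallCategory A] [SmallCategory B] (F : A ⥤ B)
    (hF : W F) (hA : IsAsphericalCat W A) : IsAsphericalCat W B :=
  hW.of_comp_left F (Functor.star B) hF (by rwa [star_fac])

lemma asp_iff_of_w {A B : Type u} [SmallCategory A] [SmallCategory B] (F : A ⥤ B)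
    (hF : W F) : IsAsphericalCat W A ↔ IsAsphericalCat W B :=
  ⟨asp_tgt hW F hF, asp_src hW F hF⟩

lemma w_of_asp {A B : Type u} [SmallCategory A] [SmallCategory B] (F : A ⥤ B)
    (hA : IsAsphericalCat W A) (hB : IsAsphericalCat W B) : W F :=
  hW.of_comp_right F (Functor.star B) hB (by rwa [star_fac])

lemma asp_of_isTerminal {A : Type u} [SmallCategory A] {t : A} (h : IsTerminal t) :
    IsAsphericalCat W A :=
  hW.star_mem A h.hasTerminal

lemma asp_of_w_slices {A B : Type u} [SmallCategory A] [SmallCategory B] (F : A ⥤ B)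
    (h : ∀ b, IsAsphericalCat W (CostructuredArrow F b)) : W F :=
  hW.mem_of_slices F (fun b => w_of_asp hW _ (h b) (asp_of_isTerminal hW Over.mkIdTerminal))

lemma adj_w {A B : Type u} [SmallCategory A] [SmallCategory B]
    {L : A ⥤ B} {R : B ⥤ A} (adj : L ⊣ R) : W L := by
  refine asp_of_w_slices hW L (fun b => asp_of_isTerminal hW
    (t := CostructuredArrow.mk (adj.counit.app b)) ?_)
  refine IsTerminal.ofUniqueHom
    (fun P => CostructuredArrow.homMk ((adj.homEquiv P.left b) P.hom) ?_) ?_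
  · have h1 : (adj.homEquiv P.left b).symm ((adj.homEquiv P.left b) P.hom) = P.hom :=
      Equiv.symm_apply_apply _ _
    rw [Adjunction.homEquiv_counit] at h1
    simpa using h1
  · intro P m
    apply CostructuredArrow.hom_ext
    have h3 : (adj.homEquiv P.left b).symm m.left = P.hom := by
      rw [Adjunction.homEquiv_counit]
      simpa using CostructuredArrow.w m
    have := (adj.homEquiv P.left b).symm.injective
      (a₁ := m.left) (a₂ := (adj.homEquiv P.left b) P.hom)
      (by rw [h3, Equiv.symm_apply_apply])
    simpa using this

lemma asp_of_isInitial {A : Type u} [SmallCategory A] {o : A} (h : IsInitial o) :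
    IsAsphericalCat W A := by
  have hs : W (Functor.fromPUnit.{u} o : PtCat.{u} ⥤ A) := by
    refine asp_of_w_slices hW _ (fun x => asp_of_isTerminal hW
      (t := CostructuredArrow.mk (Y := ⟨PUnit.unit⟩) (S := Functor.fromPUnit.{u} o) (h.to x)) ?_)
    refine IsTerminal.ofUniqueHom
      (fun P => CostructuredArrow.homMk (eqToHom (Subsingleton.elim _ _)) ?_) ?_
    · apply h.hom_ext
    · intro P m
      apply CostructuredArrow.hom_ext
      apply Subsingleton.elim
  have h2 : W ((Functor.fromPUnit.{u} o : PtCat.{u} ⥤ A) ⋙ Functor.star A) := by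
    rw [toPt_eq ((Functor.fromPUnit.{u} o : PtCat.{u} ⥤ A) ⋙ Functor.star A) (𝟭 _)]
    exact hW.id_mem _
  exact hW.of_comp_left _ (Functor.star A) hs h2

end Solution


section TwCDefs

open Limits

variable {A B : Type u} [SmallCategory A] [SmallCategory B]

/-- The twisted comma category of `u : A ⥤ B`. -/
structure TwC (u : A ⥤ B) : Type u where
  b : B
  a : A
  g : b ⟶ u.obj a

/-- Morphisms in the twisted comma category. -/
structure TwCHom {u : A ⥤ B} (X Y : TwC u) : Type u where
  φ : Y.b ⟶ X.b
  f : X.a ⟶ Y.a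
  w : Y.g = φ ≫ X.g ≫ u.map f

theorem TwCHom.ext' {u : A ⥤ B} {X Y : TwC u} {m n : TwCHom X Y}
    (h1 : m.φ = n.φ) (h2 : m.f = n.f) : m = n := by
  cases m; cases n; cases h1; cases h2; rfl

instance {u : A ⥤ B} : SmallCategory (TwC u) where
  Hom X Y := TwCHom X Y
  id X := ⟨𝟙 _, 𝟙 _, by simp⟩
  comp {X Y Z} m n := ⟨n.φ ≫ m.φ, m.f ≫ n.f, by
    rw [n.w, m.w]; simp [Functor.map_comp]⟩
  id_comp m := TwCHom.ext' (by simp) (by simp)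
  comp_id m := TwCHom.ext' (by simp) (by simp)
  assoc m n p := TwCHom.ext' (by simp) (by simp)

@[simp] lemma TwC.id_φ {u : A ⥤ B} (X : TwC u) : (𝟙 X : TwCHom X X).φ = 𝟙 X.b := rfl
@[simp] lemma TwC.id_f {u : A ⥤ B} (X : TwC u) : (𝟙 X : TwCHom X X).f = 𝟙 X.a := rfl
@[simp] lemma TwC.comp_φ {u : A ⥤ B} {X Y Z : TwC u} (m : X ⟶ Y) (n : Y ⟶ Z) :
    (m ≫ n).φ = n.φ ≫ m.φ := rfl
@[simp] lemma TwC.comp_f {u : A ⥤ B} {X Y Z : TwC u} (m : X ⟶ Y) (n : Y ⟶ Z) :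
    (m ≫ n).f = m.f ≫ n.f := rfl

/-- Second projection of the twisted comma category. -/
abbrev qT (u : A ⥤ B) : TwC u ⥤ A where
  obj X := X.a
  map m := m.f

/-- First (contravariant) projection of the twisted comma category. -/
abbrev pT (u : A ⥤ B) : TwC u ⥤ Bᵒᵖ where
  obj X := Opposite.op X.b
  map m := m.φ.op

@[simp] lemma qT_obj (u : A ⥤ B) (X : TwC u) : (qT u).obj X = X.a := rfl
@[simp] lemma qT_map (u : A ⥤ B) {X Y : TwC u} (m : X ⟶ Y) : (qT u).map m = m.f := rfl
@[simp] lemma pT_obj (u : A ⥤ B) (X : TwC u) : (pT u).obj X = Opposite.op X.b := rfl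
@[simp] lemma pT_map (u : A ⥤ B) {X Y : TwC u} (m : X ⟶ Y) : (pT u).map m = m.φ.op := rfl

/-- The contraction of a slice of `qT u` onto an opposite slice of `B`. -/
abbrev rhoQ (u : A ⥤ B) (a₀ : A) : CostructuredArrow (qT u) a₀ ⥤ (Over (u.obj a₀))ᵒᵖ where
  obj P := Opposite.op (Over.mk (P.left.g ≫ u.map P.hom))
  map {P Q} m := (Over.homMk m.left.φ (by
    have h1 := m.left.w
    have h2 := CostructuredArrow.w m
    simp only [qT_map] at h2
    simp only [Over.mk_hom, h1, Category.assoc, ← Functor.map_comp, h2])).op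
  map_id P := by
    apply Quiver.Hom.unop_inj
    apply CommaMorphism.ext
    · simp
    · apply Subsingleton.elim
  map_comp m n := by
    apply Quiver.Hom.unop_inj
    apply CommaMorphism.ext
    · simp
    · apply Subsingleton.elim

/-- The inclusion of an opposite slice of `B` into a slice of `qT u`. -/
abbrev iotaQ (u : A ⥤ B) (a₀ : A) : (Over (u.obj a₀))ᵒᵖ ⥤ CostructuredArrow (qT u) a₀ where
  obj V := CostructuredArrow.mk (S := qT u)
    (Y := ({ b := V.unop.left, a := a₀, g := V.unop.hom } : TwC u)) (𝟙 a₀)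
  map {V V'} m := CostructuredArrow.homMk
    (⟨m.unop.left, 𝟙 a₀, by simp⟩ : TwCHom _ _)
    (by simp)
  map_id V := by
    apply CostructuredArrow.hom_ext
    exact TwCHom.ext' (by simp) (by simp)
  map_comp m n := by
    apply CostructuredArrow.hom_ext
    exact TwCHom.ext' (by simp) (by simp)

/-- `rhoQ` is left adjoint to `iotaQ`. -/
def adjQ (u : A ⥤ B) (a₀ : A) : rhoQ u a₀ ⊣ iotaQ u a₀ :=
  Adjunction.mkOfHomEquiv
    { homEquiv := fun P V =>
        { toFun := fun m => CostructuredArrow.homMk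
            (⟨m.unop.left, P.hom, by
              have h := Over.w m.unop
              simp only [rhoQ, Over.mk_hom] at h
              show (Opposite.unop V).hom = _
              rw [← h]⟩ : TwCHom _ _)
            (by simp [iotaQ])
          invFun := fun n => (Over.homMk n.left.φ (by
            have h1 : (Opposite.unop V).hom
                = n.left.φ ≫ P.left.g ≫ u.map n.left.f := n.left.w
            have h3 : n.left.f = P.hom := by
              have h2 := CostructuredArrow.w n
              simp only [qT_map, iotaQ, CostructuredArrow.mk_hom_eq_self] at h2
              simpa using h2
            simp only [Over.mk_hom]
            exact (h1.trans (by rw [h3])).symm)).op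
          left_inv := fun m => by
            apply Quiver.Hom.unop_inj
            apply CommaMorphism.ext
            · simp
            · apply Subsingleton.elim
          right_inv := fun n => by
            apply CostructuredArrow.hom_ext
            refine TwCHom.ext' (by simp) ?_
            have h2 := CostructuredArrow.w n
            simp only [qT_map, iotaQ, CostructuredArrow.mk_hom_eq_self,
              Category.comp_id] at h2
            simpa using h2.symm }
      homEquiv_naturality_left_symm := by
        intro P' P V m n
        apply Quiver.Hom.unop_inj
        apply CommaMorphism.ext
        · simp [rhoQ]
        · apply Subsingleton.elim
      homEquiv_naturality_right := by
        intro P V V' n m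
        apply CostructuredArrow.hom_ext
        refine TwCHom.ext' ?_ ?_
        · simp [iotaQ]
        · simp [iotaQ] }

/-- The contraction of a slice of `pT u` onto a coslice of `u`. -/
abbrev rhoP (u : A ⥤ B) (y : Bᵒᵖ) : CostructuredArrow (pT u) y ⥤ StructuredArrow y.unop u where
  obj P := StructuredArrow.mk (P.hom.unop ≫ P.left.g)
  map {P Q} m := StructuredArrow.homMk m.left.f (by
    have h1 := m.left.w
    have h2 := CostructuredArrow.w m
    simp only [pT_map] at h2
    have h3 : Q.hom.unop ≫ m.left.φ = P.hom.unop := by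
      have := congrArg Quiver.Hom.unop h2
      simpa using this
    simp only [StructuredArrow.mk_hom_eq_self, h1]
    simp only [← Category.assoc]
    rw [h3])
  map_id P := by
    apply StructuredArrow.hom_ext
    simp
  map_comp m n := by
    apply StructuredArrow.hom_ext
    simp

/-- The inclusion of a coslice of `u` into a slice of `pT u`. -/
abbrev iotaP (u : A ⥤ B) (y : Bᵒᵖ) : StructuredArrow y.unop u ⥤ CostructuredArrow (pT u) y where
  obj V := CostructuredArrow.mk (S := pT u)
    (Y := ({ b := y.unop, a := V.right, g := V.hom } : TwC u)) (𝟙 y)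
  map {V V'} m := CostructuredArrow.homMk
    (⟨𝟙 y.unop, m.right, by
      have h := StructuredArrow.w m
      show V'.hom = 𝟙 (Opposite.unop y) ≫ V.hom ≫ u.map m.right
      rw [Category.id_comp, ← h]⟩ : TwCHom _ _)
    (by
      apply Quiver.Hom.unop_inj
      simp)
  map_id V := by
    apply CostructuredArrow.hom_ext
    exact TwCHom.ext' (by simp) (by simp)
  map_comp m n := by
    apply CostructuredArrow.hom_ext
    exact TwCHom.ext' (by simp) (by simp)

/-- `rhoP` is left adjoint to `iotaP`. -/
def adjP (u : A ⥤ B) (y : Bᵒᵖ) : rhoP u y ⊣ iotaP u y :=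
  Adjunction.mkOfHomEquiv
    { homEquiv := fun P V =>
        { toFun := fun m => CostructuredArrow.homMk
            (⟨P.hom.unop, m.right, by
              have h := StructuredArrow.w m
              simp only [rhoP, StructuredArrow.mk_hom_eq_self] at h
              show V.hom = _
              rw [← h, Category.assoc]⟩ : TwCHom _ _)
            (by
              have : (P.hom.unop).op ≫ 𝟙 y = P.hom := by simp
              exact this)
          invFun := fun n => StructuredArrow.homMk n.left.f (by
            have h1 : V.hom = n.left.φ ≫ P.left.g ≫ u.map n.left.f := n.left.w
            have h3 : n.left.φ = P.hom.unop := by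
              have h2 := CostructuredArrow.w n
              simp only [pT_map, iotaP, CostructuredArrow.mk_hom_eq_self,
                Category.comp_id] at h2
              have := congrArg Quiver.Hom.unop h2
              simpa using this
            simp only [rhoP, StructuredArrow.mk_hom_eq_self]
            exact (h1.trans (by rw [h3, Category.assoc])).symm)
          left_inv := fun m => by
            apply StructuredArrow.hom_ext
            simp [rhoP]
          right_inv := fun n => by
            apply CostructuredArrow.hom_ext
            refine TwCHom.ext' ?_ (by simp)
            have h2 := CostructuredArrow.w n
            simp only [pT_map, iotaP, CostructuredArrow.mk_hom_eq_self,
              Category.comp_id] at h2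
            have h4 := congrArg Quiver.Hom.unop h2
            simpa using h4.symm }
      homEquiv_naturality_left_symm := by
        intro P' P V m n
        apply StructuredArrow.hom_ext
        simp [rhoP]
      homEquiv_naturality_right := by
        intro P V V' n m
        apply CostructuredArrow.hom_ext
        refine TwCHom.ext' ?_ ?_
        · simp [iotaP]
        · simp [iotaP] }

end TwCDefs


section NablaDefs

variable {X Y Z : Type u} [SmallCategory X] [SmallCategory Y] [SmallCategory Z]

/-- Comparison functor from a coslice of `triangleCoslice S T z` to a coslice of `S`. -/
abbrev nablaF (S : X ⥤ Y) (T : Y ⥤ Z) (z : Z) (m : StructuredArrow z T) :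
    StructuredArrow m (triangleCoslice S T z) ⥤ StructuredArrow m.right S where
  obj P := StructuredArrow.mk (P.hom.right : m.right ⟶ S.obj P.right.right)
  map {P Q} n := StructuredArrow.homMk n.right.right (by
    have h := congrArg CommaMorphism.right (StructuredArrow.w n)
    simpa [triangleCoslice] using h)
  map_id P := by apply StructuredArrow.hom_ext; rfl
  map_comp n n' := by apply StructuredArrow.hom_ext; simp

/-- Comparison functor from a coslice of `S` to a coslice of `triangleCoslice S T z`. -/
abbrev deltaF (S : X ⥤ Y) (T : Y ⥤ Z) (z : Z) (m : StructuredArrow z T) :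
    StructuredArrow m.right S ⥤ StructuredArrow m (triangleCoslice S T z) where
  obj V := StructuredArrow.mk
    (Y := StructuredArrow.mk (Y := V.right) (f := m.hom ≫ T.map V.hom))
    (StructuredArrow.homMk V.hom (by simp [triangleCoslice]))
  map {V V'} n := StructuredArrow.homMk
    (StructuredArrow.homMk n.right (by
      have h := StructuredArrow.w n
      simp only [Functor.comp_map, StructuredArrow.mk_right,
        StructuredArrow.mk_hom_eq_self, Category.assoc, ← Functor.map_comp, h]))
    (by
      apply StructuredArrow.hom_ext
      simp [triangleCoslice])
  map_id V := by
    apply StructuredArrow.hom_ext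
    apply StructuredArrow.hom_ext
    simp
  map_comp n n' := by
    apply StructuredArrow.hom_ext
    apply StructuredArrow.hom_ext
    simp

/-- `nablaF` is left adjoint to `deltaF`. -/
def adjND (S : X ⥤ Y) (T : Y ⥤ Z) (z : Z) (m : StructuredArrow z T) :
    nablaF S T z m ⊣ deltaF S T z m :=
  Adjunction.mkOfHomEquiv
    { homEquiv := fun P V =>
        { toFun := fun k => by
            have hP : m.hom ≫ T.map P.hom.right = P.right.hom := by
              simpa [triangleCoslice] using StructuredArrow.w P.hom
            have hk : P.hom.right ≫ S.map k.right = V.hom := by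
              exact StructuredArrow.w k
            exact StructuredArrow.homMk
              (StructuredArrow.homMk k.right (by
                rw [← hP]
                simp only [deltaF, StructuredArrow.mk_right,
                  StructuredArrow.mk_hom_eq_self]
                rw [← hk]
                simp [Functor.map_comp]
                exact (congrArg (· ≫ T.map (S.map k.right)) hP).symm.trans
                  ((Category.assoc _ _ _).trans (congrArg (m.hom ≫ ·) (T.map_comp _ _).symm))))
              (by
                apply StructuredArrow.hom_ext
                simpa [triangleCoslice, deltaF] using hk)
          invFun := fun η => StructuredArrow.homMk η.right.right (by
            have h := congrArg CommaMorphism.right (StructuredArrow.w η)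
            simp only [Comma.comp_left, Comma.comp_right] at h
            simpa [triangleCoslice, deltaF, nablaF] using h)
          left_inv := fun k => by
            apply StructuredArrow.hom_ext
            simp [nablaF]
          right_inv := fun η => by
            apply StructuredArrow.hom_ext
            apply StructuredArrow.hom_ext
            simp [deltaF] }
      homEquiv_naturality_left_symm := by
        intro P' P V k η
        apply StructuredArrow.hom_ext
        simp [nablaF]
      homEquiv_naturality_right := by
        intro P V V' η n
        apply StructuredArrow.hom_ext
        apply StructuredArrow.hom_ext
        simp [deltaF] }

end NablaDefs

section WLemmas

open Limits

variable {W : FunctorClass.{u}} (hW : IsWeakFundamentalLocalizer W)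
include hW

lemma asp_over_op {B : Type u} [SmallCategory B] (x : B) :
    IsAsphericalCat W ((Over x)ᵒᵖ) := by
  refine asp_of_isInitial hW (o := Opposite.op (Over.mk (𝟙 x))) ?_
  refine IsInitial.ofUniqueHom (fun V => (Over.homMk V.unop.hom (by simp)).op) ?_
  intro V n
  apply Quiver.Hom.unop_inj
  apply CommaMorphism.ext
  · simpa using Over.w n.unop
  · apply Subsingleton.elim

lemma w_qT {A B : Type u} [SmallCategory A] [SmallCategory B] (u : A ⥤ B) :
    W (qT u) :=
  asp_of_w_slices hW _ (fun a₀ =>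
    asp_src hW (rhoQ u a₀) (adj_w hW (adjQ u a₀)) (asp_over_op hW (u.obj a₀)))

lemma w_pT {A B : Type u} [SmallCategory A] [SmallCategory B] (u : A ⥤ B)
    (hu : IsCoasphericalFunctor W u) : W (pT u) :=
  asp_of_w_slices hW _ (fun y =>
    asp_src hW (rhoP u y) (adj_w hW (adjP u y)) (hu y.unop))

lemma id_coasph {B : Type u} [SmallCategory B] :
    IsCoasphericalFunctor W (𝟭 B) := by
  intro b
  exact asp_of_isInitial hW (StructuredArrow.mkIdInitial (T := 𝟭 B) (Y := b))

lemma asp_op_iff (B : Type u) [SmallCategory B] :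
    IsAsphericalCat W Bᵒᵖ ↔ IsAsphericalCat W B :=
  (asp_iff_of_w hW _ (w_pT hW (𝟭 B) (id_coasph hW))).symm.trans
    (asp_iff_of_w hW _ (w_qT hW (𝟭 B)))

lemma asp_iff_of_coasph {A B : Type u} [SmallCategory A] [SmallCategory B]
    (F : A ⥤ B) (hF : IsCoasphericalFunctor W F) :
    IsAsphericalCat W A ↔ IsAsphericalCat W B :=
  (asp_iff_of_w hW _ (w_qT hW F)).symm.trans
    ((asp_iff_of_w hW _ (w_pT hW F hF)).trans (asp_op_iff hW B))

lemma triangleCoslice_coasph {X Y Z : Type u} [SmallCategory X] [SmallCategory Y]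
    [SmallCategory Z] (S : X ⥤ Y) (T : Y ⥤ Z) (z : Z)
    (hS : IsCoasphericalFunctor W S) :
    IsCoasphericalFunctor W (triangleCoslice S T z) := fun m =>
  asp_src hW (nablaF S T z m) (adj_w hW (adjND S T z m)) (hS m.right)

lemma coasph_comp_iff {X Y Z : Type u} [SmallCategory X] [SmallCategory Y]
    [SmallCategory Z] (S : X ⥤ Y) (T : Y ⥤ Z) (hS : IsCoasphericalFunctor W S) :
    IsCoasphericalFunctor W (S ⋙ T) ↔ IsCoasphericalFunctor W T := by
  constructor
  · intro h z
    exact (asp_iff_of_coasph hW _ (triangleCoslice_coasph hW S T z hS)).mp (h z)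
  · intro h z
    exact (asp_iff_of_coasph hW _ (triangleCoslice_coasph hW S T z hS)).mpr (h z)

end WLemmas


section Hcomp

lemma squareSlice_hcomp {A A' A'' B B' B'' : Type u}
    [SmallCategory A] [SmallCategory A'] [SmallCategory A'']
    [SmallCategory B] [SmallCategory B'] [SmallCategory B'']
    (u : A ⥤ B) (u' : A' ⥤ B') (u'' : A'' ⥤ B'')
    (v : A' ⥤ A) (w : B' ⥤ B) (v' : A'' ⥤ A') (w' : B'' ⥤ B')
    (α : v ⋙ u ⟶ u' ⋙ w) (α' : v' ⋙ u' ⟶ u'' ⋙ w') (b'' : B'') :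
    squareSlice u u'' (v' ⋙ v) (w' ⋙ w) (hcomp2cell α α') b'' =
      squareSlice u' u'' v' w' α' b'' ⋙ squareSlice u u' v w α (w'.obj b'') := by
  refine CategoryTheory.Functor.ext (fun x => ?_) (fun x y f => ?_)
  · dsimp [squareSlice, hcomp2cell]
    congr 1
    simp [Category.assoc]
  · apply CostructuredArrow.hom_ext
    rw [Comma.comp_left, Comma.comp_left, Comma.eqToHom_left, Comma.eqToHom_left]
    dsimp [squareSlice]
    simp
    erw [eqToHom_refl, Category.id_comp]

end Hcomp


theorem statement3 (W : FunctorClass.{u}) (hW : IsWeakFundamentalLocalizer W)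
    {A A' B B' : Type u} [SmallCategory A] [SmallCategory A'] [SmallCategory B]
    [SmallCategory B'] (u : A ⥤ B) (u' : A' ⥤ B') (v : A' ⥤ A) (w : B' ⥤ B)
    (α : v ⋙ u ⟶ u' ⋙ w)
    (J : Type u) (Aj Bj : J → Type u)
    [∀ j, SmallCategory (Aj j)] [∀ j, SmallCategory (Bj j)]
    (uj : ∀ j, Aj j ⥤ Bj j) (vj : ∀ j, Aj j ⥤ A') (wj : ∀ j, Bj j ⥤ B')
    (αj : ∀ j, vj j ⋙ u' ⟶ uj j ⋙ wj j)
    (hex : ∀ j, IsExactSquare W u' (uj j) (vj j) (wj j) (αj j))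
    (hsurj : ∀ b' : B', ∃ j, ∃ b : Bj j, (wj j).obj b = b') :
    IsExactSquare W u u' v w α ↔
      ∀ j, IsExactSquare W u (uj j) (vj j ⋙ v) (wj j ⋙ w) (hcomp2cell α (αj j)) := by
  constructor
  · intro hD j b''
    rw [squareSlice_hcomp u u' (uj j) v w (vj j) (wj j) α (αj j) b'']
    exact (coasph_comp_iff hW _ _ (hex j b'')).mpr (hD ((wj j).obj b''))
  · intro hcmp b'
    obtain ⟨j, b, hb⟩ := hsurj b'
    subst hb
    have h := hcmp j b
    rw [squareSlice_hcomp u u' (uj j) v w (vj j) (wj j) α (αj j) b] at h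
    exact (coasph_comp_iff hW _ _ (hex j b)).mp h

end Paper
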